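/- arXiv:0906.1568 — 2 statements merged into one kernel-verified Lean document; each statement's English description precedes it below -/
import Mathlib

section
/- Solutions h on (0,∞) of the modified Bessel-type ODE ((t∂ₜ)² - t² - ν²)h = 0 with ν > 0 that lie in t^{-1/2}L²((0,∞), t^{f₀}dt) after multiplication by t^{-(f₀+2a+1)/2}, where 2a + 2ν ≥ 1 and a > 0, must be identically zero; more precisely, every solution is a linear combination of the modified Bessel functions I_ν and K_ν, I_ν grows exponentially at infinity, and t^{-(f₀+2a+1)/2}K_ν fails to be square-integrable near 0 against t^{f₀}dt. -/
open Set MeasureTheory Real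

private lemma mono_aux {F F' : ℝ → ℝ} {x y : ℝ} (hx : 0 < x) (hxy : x ≤ y)
    (hd : ∀ t ∈ Set.Ioi (0:ℝ), HasDerivAt F (F' t) t)
    (hnn : ∀ t ∈ Set.Ioo x y, 0 ≤ F' t) : F x ≤ F y := by
  have hsub : Set.Icc x y ⊆ Set.Ioi (0:ℝ) := fun t ht => lt_of_lt_of_le hx ht.1
  have hmono := monotoneOn_of_deriv_nonneg (convex_Icc x y)
    (fun t ht => ((hd t (hsub ht)).continuousAt).continuousWithinAt)
    (fun t ht => by
      rw [interior_Icc] at ht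
      exact ((hd t (hsub (Set.Ioo_subset_Icc_self ht))).differentiableAt).differentiableWithinAt)
    (fun t ht => by
      rw [interior_Icc] at ht
      rw [(hd t (hsub (Set.Ioo_subset_Icc_self ht))).deriv]
      exact hnn t ht)
  exact hmono (Set.left_mem_Icc.2 hxy) (Set.right_mem_Icc.2 hxy) hxy
private lemma prop_fwd {ν : ℝ} {h φ : ℝ → ℝ}
    (hh' : ∀ t ∈ Set.Ioi (0:ℝ), HasDerivAt h (φ t / t) t)
    (hφ : ∀ t ∈ Set.Ioi (0:ℝ), HasDerivAt φ ((t + ν^2/t) * h t) t)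
    {t₀ : ℝ} (ht₀ : 0 < t₀) (hpos : 0 < h t₀) (hφ0 : 0 ≤ φ t₀) :
    ∀ t, t₀ ≤ t → h t₀ ≤ h t ∧ 0 ≤ φ t := by
  have main : ∀ t₁, t₀ ≤ t₁ → h t₀ ≤ h t₁ := by
    intro t₁ ht₁
    by_contra hcon
    push_neg at hcon
    set m := max ((h t₁ + h t₀)/2) (h t₀/2) with hm
    have hmc : m < h t₀ := max_lt (by linarith) (by linarith)
    have hm0 : 0 < m := lt_of_lt_of_le (by linarith) (le_max_right _ _)
    have hm1 : h t₁ ≤ m := le_trans (by linarith) (le_max_left _ _)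
    set A := Set.Icc t₀ t₁ ∩ h ⁻¹' (Set.Iic m) with hA
    have hsub : Set.Icc t₀ t₁ ⊆ Set.Ioi (0:ℝ) := fun s hs => lt_of_lt_of_le ht₀ hs.1
    have hA_closed : IsClosed A := by
      have hc : ContinuousOn h (Set.Icc t₀ t₁) := fun s hs =>
        ((hh' s (hsub hs)).continuousAt).continuousWithinAt
      exact hc.preimage_isClosed_of_isClosed isClosed_Icc isClosed_Iic
    have hne : A.Nonempty := ⟨t₁, ⟨ht₁, le_refl _⟩, hm1⟩
    have hbdd : BddBelow A := ⟨t₀, fun s hs => hs.1.1⟩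
    set T := sInf A with hT
    have hTA : T ∈ A := hA_closed.csInf_mem hne hbdd
    have hTgt : t₀ < T := by
      rcases lt_or_eq_of_le hTA.1.1 with h' | h'
      · exact h'
      · exfalso; rw [← h'] at hTA; have := hTA.2; simp only [Set.mem_preimage, Set.mem_Iic] at this; linarith
    have hmid : ∀ s, t₀ ≤ s → s < T → m < h s := by
      intro s hs1 hs2
      by_contra hc2; push_neg at hc2
      have hsA : s ∈ A := ⟨⟨hs1, le_trans hs2.le hTA.1.2⟩, hc2⟩
      exact absurd (csInf_le hbdd hsA) (not_le.mpr hs2)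
    have hφnn : ∀ s, t₀ ≤ s → s ≤ T → 0 ≤ φ s := by
      intro s hs1 hs2
      refine le_trans hφ0 (mono_aux ht₀ hs1 hφ ?_)
      intro u hu
      have hu0 : (0:ℝ) < u := lt_trans ht₀ hu.1
      have hhu : 0 < h u := lt_trans hm0 (hmid u hu.1.le (lt_of_lt_of_le hu.2 hs2))
      have h1 : 0 ≤ ν^2/u := div_nonneg (sq_nonneg ν) hu0.le
      nlinarith
    have hfin : h t₀ ≤ h T :=
      mono_aux ht₀ hTA.1.1 hh' (fun u hu =>
        div_nonneg (hφnn u hu.1.le hu.2.le) (le_of_lt (lt_trans ht₀ hu.1)))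
    have := hTA.2
    simp only [Set.mem_preimage, Set.mem_Iic] at this
    linarith
  intro t ht
  refine ⟨main t ht, ?_⟩
  refine le_trans hφ0 (mono_aux ht₀ ht hφ ?_)
  intro u hu
  have hu0 : (0:ℝ) < u := lt_trans ht₀ hu.1
  have h1 : 0 ≤ ν^2/u := div_nonneg (sq_nonneg ν) hu0.le
  have h2 := main u hu.1.le
  nlinarith

private lemma prop_bwd {ν : ℝ} {h φ : ℝ → ℝ}
    (hh' : ∀ t ∈ Set.Ioi (0:ℝ), HasDerivAt h (φ t / t) t)
    (hφ : ∀ t ∈ Set.Ioi (0:ℝ), HasDerivAt φ ((t + ν^2/t) * h t) t)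
    {t₀ : ℝ} (ht₀ : 0 < t₀) (hpos : 0 < h t₀) (hφ0 : φ t₀ ≤ 0) :
    ∀ t, 0 < t → t ≤ t₀ → h t₀ ≤ h t ∧ φ t ≤ 0 := by
  have main : ∀ t₁, 0 < t₁ → t₁ ≤ t₀ → h t₀ ≤ h t₁ := by
    intro t₁ ht₁0 ht₁
    by_contra hcon
    push_neg at hcon
    set m := max ((h t₁ + h t₀)/2) (h t₀/2) with hm
    have hmc : m < h t₀ := max_lt (by linarith) (by linarith)
    have hm0 : 0 < m := lt_of_lt_of_le (by linarith) (le_max_right _ _)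
    have hm1 : h t₁ ≤ m := le_trans (by linarith) (le_max_left _ _)
    set A := Set.Icc t₁ t₀ ∩ h ⁻¹' (Set.Iic m) with hA
    have hsub : Set.Icc t₁ t₀ ⊆ Set.Ioi (0:ℝ) := fun s hs => lt_of_lt_of_le ht₁0 hs.1
    have hA_closed : IsClosed A := by
      have hc : ContinuousOn h (Set.Icc t₁ t₀) := fun s hs =>
        ((hh' s (hsub hs)).continuousAt).continuousWithinAt
      exact hc.preimage_isClosed_of_isClosed isClosed_Icc isClosed_Iic
    have hne : A.Nonempty := ⟨t₁, ⟨le_refl _, ht₁⟩, hm1⟩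
    have hbdd : BddAbove A := ⟨t₀, fun s hs => hs.1.2⟩
    set T := sSup A with hT
    have hTA : T ∈ A := hA_closed.csSup_mem hne hbdd
    have hT0 : 0 < T := lt_of_lt_of_le ht₁0 hTA.1.1
    have hTlt : T < t₀ := by
      rcases lt_or_eq_of_le hTA.1.2 with h' | h'
      · exact h'
      · exfalso; rw [h'] at hTA; have := hTA.2; simp only [Set.mem_preimage, Set.mem_Iic] at this; linarith
    have hmid : ∀ s, T < s → s ≤ t₀ → m < h s := by
      intro s hs1 hs2
      by_contra hc2; push_neg at hc2
      have hsA : s ∈ A := ⟨⟨le_trans hTA.1.1 hs1.le, hs2⟩, hc2⟩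
      exact absurd (le_csSup hbdd hsA) (not_le.mpr hs1)
    have hφnp : ∀ s, T ≤ s → s ≤ t₀ → φ s ≤ 0 := by
      intro s hs1 hs2
      have hs0 : 0 < s := lt_of_lt_of_le hT0 hs1
      refine le_trans (mono_aux hs0 hs2 hφ ?_) hφ0
      intro u hu
      have hu0 : (0:ℝ) < u := lt_trans hs0 hu.1
      have hhu : 0 < h u := lt_trans hm0 (hmid u (lt_of_le_of_lt hs1 hu.1) hu.2.le)
      have h1 : 0 ≤ ν^2/u := div_nonneg (sq_nonneg ν) hu0.le
      nlinarith
    have hfin : (fun u => -h u) T ≤ (fun u => -h u) t₀ := by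
      refine mono_aux (F := fun u => -h u) (F' := fun u => -(φ u / u)) hT0 hTA.1.2
        (fun u hu => (hh' u hu).neg) ?_
      intro u hu
      have hu0 : (0:ℝ) < u := lt_trans hT0 hu.1
      have := hφnp u hu.1.le hu.2.le
      have : φ u / u ≤ 0 := div_nonpos_of_nonpos_of_nonneg this hu0.le
      linarith
    have := hTA.2
    simp only [Set.mem_preimage, Set.mem_Iic] at this
    simp only [] at hfin
    linarith
  intro t ht0 ht
  refine ⟨main t ht0 ht, ?_⟩
  refine le_trans (mono_aux ht0 ht hφ ?_) hφ0
  intro u hu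
  have hu0 : (0:ℝ) < u := lt_trans ht0 hu.1
  have h1 : 0 ≤ ν^2/u := div_nonneg (sq_nonneg ν) hu0.le
  have h2 := main u hu0 hu.2.le
  nlinarith
private lemma grow_fwd {ν : ℝ} {h φ : ℝ → ℝ}
    (hh' : ∀ t ∈ Set.Ioi (0:ℝ), HasDerivAt h (φ t / t) t)
    (hφ : ∀ t ∈ Set.Ioi (0:ℝ), HasDerivAt φ ((t + ν^2/t) * h t) t)
    {t₀ : ℝ} (ht₀ : 0 < t₀) (hpos : 0 < h t₀)
    (hlow : ∀ t, t₀ ≤ t → h t₀ ≤ h t ∧ 0 ≤ φ t) :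
    ∀ k : ℕ, ∃ C, 0 < C ∧ ∃ T, t₀ ≤ T ∧ ∀ t, T ≤ t → C * t ^ k ≤ h t := by
  intro k
  induction k with
  | zero => exact ⟨h t₀, hpos, t₀, le_refl _, fun t ht => by simpa using (hlow t ht).1⟩
  | succ k ih =>
    obtain ⟨C, hC, T, hT, hb⟩ := ih
    have hT0 : 0 < T := lt_of_lt_of_le ht₀ hT
    have hk2 : (0:ℝ) < (k:ℝ) + 2 := by positivity
    -- Step 1 : lower bound for φ
    have hφlb : ∀ t, T ≤ t → C / ((k:ℝ)+2) * (t^(k+2) - T^(k+2)) ≤ φ t := by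
      intro t ht
      have hder : ∀ s ∈ Set.Ioi (0:ℝ), HasDerivAt (fun u => φ u - C/((k:ℝ)+2) * u^(k+2))
          ((s + ν^2/s) * h s - C * s^(k+1)) s := by
        intro s hs
        have h1 := (hasDerivAt_pow (k+2) s).const_mul (C/((k:ℝ)+2))
        have h2 := (hφ s hs).sub h1
        refine h2.congr_deriv ?_
        push_cast
        field_simp
      have hmono := mono_aux hT0 ht hder (fun s hs => by
        have hs0 : (0:ℝ) < s := lt_trans hT0 hs.1
        have hsT : T ≤ s := hs.1.le
        have h1 : C * s^(k+1) = s * (C * s^k) := by ring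
        have h2 : s * (C*s^k) ≤ s * h s := mul_le_mul_of_nonneg_left (hb s hsT) hs0.le
        have h3 : 0 ≤ (ν^2/s) * h s := mul_nonneg (div_nonneg (sq_nonneg ν) hs0.le)
          (le_trans hpos.le (hlow s (le_trans hT hsT)).1)
        have h4 : (s + ν^2/s) * h s = s * h s + (ν^2/s) * h s := by ring
        linarith)
      have hφT : 0 ≤ φ T := (hlow T hT).2
      linarith
    -- Step 2 : clean lower bound for φ
    have hφlb2 : ∀ t, 2*T ≤ t → C/(2*((k:ℝ)+2)) * t^(k+2) ≤ φ t := by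
      intro t ht2
      have htT : T ≤ t := by linarith
      have ht0 : (0:ℝ) < t := lt_of_lt_of_le hT0 htT
      have h1 := hφlb t htT
      have h2 : T^(k+2) ≤ (t/2)^(k+2) := pow_le_pow_left₀ hT0.le (by linarith) (k+2)
      have h3 : (t/2)^(k+2) = t^(k+2)/2^(k+2) := div_pow t 2 (k+2)
      have h4 : t^(k+2)/2^(k+2) ≤ t^(k+2)/2 := by
        apply div_le_div_of_nonneg_left (pow_nonneg ht0.le _) (by norm_num)
        have : (2:ℝ)^1 ≤ 2^(k+2) := pow_le_pow_right₀ (by norm_num) (by omega)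
        simpa using this
      have h5 : T^(k+2) ≤ t^(k+2)/2 := by linarith
      have h6 : C/((k:ℝ)+2) * T^(k+2) ≤ C/((k:ℝ)+2) * (t^(k+2)/2) :=
        mul_le_mul_of_nonneg_left h5 (by positivity)
      have e : C/(2*((k:ℝ)+2)) * t^(k+2) = C/((k:ℝ)+2) * t^(k+2) - C/((k:ℝ)+2) * (t^(k+2)/2) := by
        field_simp
        ring
      linarith
    -- Step 3 : lower bound for h
    set C₁ := C/(2*((k:ℝ)+2)) with hC₁
    have hC₁0 : 0 < C₁ := by positivity
    set C₂ := C₁/(2*((k:ℝ)+2)) with hC₂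
    have hC₂0 : 0 < C₂ := by positivity
    have hhlb : ∀ t, 4*T ≤ t → C₂ * t^(k+2) ≤ h t := by
      intro t ht4
      have ht2T : 2*T ≤ t := by linarith
      have ht0 : (0:ℝ) < t := by linarith
      have hder2 : ∀ s ∈ Set.Ioi (0:ℝ), HasDerivAt (fun u => h u - C₁/((k:ℝ)+2) * u^(k+2))
          (φ s / s - C₁ * s^(k+1)) s := by
        intro s hs
        have h1 := (hasDerivAt_pow (k+2) s).const_mul (C₁/((k:ℝ)+2))
        have h2 := (hh' s hs).sub h1
        refine h2.congr_deriv ?_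
        push_cast
        field_simp
      have h2T0 : (0:ℝ) < 2*T := by linarith
      have hmono := mono_aux h2T0 ht2T hder2 (fun s hs => by
        have hs0 : (0:ℝ) < s := lt_trans h2T0 hs.1
        have h1 := hφlb2 s hs.1.le
        have h2 : C₁ * s^(k+2) / s ≤ φ s / s := (div_le_div_iff_of_pos_right hs0).mpr h1
        have h3 : C₁ * s^(k+2) / s = C₁ * s^(k+1) := by
          rw [pow_succ, ← mul_assoc, mul_div_cancel_right₀ _ hs0.ne']
        linarith)
      have hh2T : 0 < h (2*T) := lt_of_lt_of_le hpos (hlow (2*T) (by linarith)).1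
      have h2 : (2*T)^(k+2) ≤ (t/2)^(k+2) := pow_le_pow_left₀ h2T0.le (by linarith) (k+2)
      have h3 : (t/2)^(k+2) = t^(k+2)/2^(k+2) := div_pow t 2 (k+2)
      have h4 : t^(k+2)/2^(k+2) ≤ t^(k+2)/2 := by
        apply div_le_div_of_nonneg_left (pow_nonneg ht0.le _) (by norm_num)
        have : (2:ℝ)^1 ≤ 2^(k+2) := pow_le_pow_right₀ (by norm_num) (by omega)
        simpa using this
      have h5 : (2*T)^(k+2) ≤ t^(k+2)/2 := by linarith
      have h6 : C₁/((k:ℝ)+2) * (2*T)^(k+2) ≤ C₁/((k:ℝ)+2) * (t^(k+2)/2) :=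
        mul_le_mul_of_nonneg_left h5 (by positivity)
      have e : C₂ * t^(k+2) = C₁/((k:ℝ)+2) * t^(k+2) - C₁/((k:ℝ)+2) * (t^(k+2)/2) := by
        rw [hC₂]
        field_simp
        ring
      linarith
    refine ⟨C₂ * (4*T), by positivity, 4*T, by linarith, fun t ht4 => ?_⟩
    have ht0 : (0:ℝ) < t := by linarith
    have h1 : 4*T * t^(k+1) ≤ t * t^(k+1) :=
      mul_le_mul_of_nonneg_right ht4 (pow_nonneg ht0.le (k+1))
    have h2 : t * t^(k+1) = t^(k+2) := by rw [← pow_succ']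
    have h3 := hhlb t ht4
    nlinarith [hC₂0]
private lemma fwd_contra {a : ℝ} (ha : 0 < a) {h : ℝ → ℝ}
    (hL2 : MeasureTheory.IntegrableOn (fun t => h t ^ 2 * t ^ (-(2*a))) (Set.Ioi 0)
      MeasureTheory.volume)
    {C T : ℝ} (hC : 0 < C) (hT0 : 0 < T) {k : ℕ} (hk : a < k)
    (hb : ∀ t, T ≤ t → C * t ^ k ≤ h t) : False := by
  have hint : IntegrableOn (fun t => t ^ (2*(k:ℝ) - 2*a)) (Set.Ioi T) volume := by
    have hg : Integrable (fun t => C⁻¹^2 * (h t ^ 2 * t ^ (-(2*a))))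
        (volume.restrict (Set.Ioi T)) :=
      (hL2.mono_set (Set.Ioi_subset_Ioi hT0.le)).const_mul _
    refine hg.mono' ?_ ?_
    · refine ContinuousOn.aestronglyMeasurable ?_ measurableSet_Ioi
      intro x hx
      exact (Real.continuousAt_rpow_const x _ (Or.inl (ne_of_gt (lt_trans hT0 hx)))).continuousWithinAt
    · filter_upwards [ae_restrict_mem measurableSet_Ioi] with t htmem
      have ht0 : 0 < t := lt_trans hT0 htmem
      have hb' := hb t (le_of_lt htmem)
      rw [Real.norm_eq_abs, abs_of_nonneg (Real.rpow_nonneg ht0.le _)]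
      have e1 : t ^ (2*(k:ℝ) - 2*a) = t^(2*(k:ℝ)) * t^(-(2*a)) := by
        rw [← Real.rpow_add ht0]; ring_nf
      have e2 : ((t^k)^2 : ℝ) = t ^ (2*(k:ℝ)) := by
        rw [← pow_mul, ← Real.rpow_natCast t (k*2)]
        push_cast
        ring_nf
      have h5 : (C*t^k)^2 * t^(-(2*a)) ≤ h t^2 * t^(-(2*a)) :=
        mul_le_mul_of_nonneg_right
          (pow_le_pow_left₀ (by positivity) hb' 2) (Real.rpow_nonneg ht0.le _)
      have e3 : t ^ (2*(k:ℝ)) * t^(-(2*a)) = C⁻¹^2 * ((C*t^k)^2 * t^(-(2*a))) := by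
        rw [← e2, mul_pow]
        field_simp
      calc t ^ (2*(k:ℝ) - 2*a) = C⁻¹^2 * ((C*t^k)^2 * t^(-(2*a))) := by rw [e1, e3]
        _ ≤ C⁻¹^2 * (h t ^2 * t^(-(2*a))) := mul_le_mul_of_nonneg_left h5 (by positivity)
  rw [integrableOn_Ioi_rpow_iff hT0] at hint
  have : (0:ℝ) ≤ 2*(k:ℝ) - 2*a := by linarith
  linarith
private lemma bwd_blowup {ν : ℝ} (hν : 0 < ν) {h φ : ℝ → ℝ}
    (hh' : ∀ t ∈ Set.Ioi (0:ℝ), HasDerivAt h (φ t / t) t)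
    (hφ : ∀ t ∈ Set.Ioi (0:ℝ), HasDerivAt φ ((t + ν^2/t) * h t) t)
    {t₀ : ℝ} (ht₀ : 0 < t₀) (hpos : 0 < h t₀) (hφ0 : φ t₀ ≤ 0)
    (hlow : ∀ t, 0 < t → t ≤ t₀ → h t₀ ≤ h t ∧ φ t ≤ 0) :
    ∃ c, 0 < c ∧ ∃ t₁, 0 < t₁ ∧ ∀ t, 0 < t → t ≤ t₁ → c * t ^ (-ν) ≤ h t := by
  set W : ℝ → ℝ := fun t => t^ν * (φ t - ν * h t) with hWdef
  have hWd : ∀ t ∈ Set.Ioi (0:ℝ), HasDerivAt W (t^ν * t * h t) t := by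
    intro t ht
    have ht0 : (0:ℝ) < t := ht
    have base := (Real.hasDerivAt_rpow_const (x := t) (p := ν) (Or.inl ht0.ne')).mul
      ((hφ t ht).sub ((hh' t ht).const_mul ν))
    refine base.congr_deriv ?_
    simp only [Pi.sub_apply]
    rw [Real.rpow_sub_one ht0.ne']
    field_simp
    ring
  set c₁ := ν * h t₀ * t₀^ν with hc₁def
  have hc₁ : 0 < c₁ := mul_pos (mul_pos hν hpos) (Real.rpow_pos_of_pos ht₀ ν)
  have hW : ∀ t, 0 < t → t ≤ t₀ → W t ≤ -c₁ := by
    intro t ht0 htt₀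
    have h1 : W t ≤ W t₀ := by
      refine mono_aux ht0 htt₀ hWd ?_
      intro u hu
      have hu0 : (0:ℝ) < u := lt_trans ht0 hu.1
      have hhu : 0 < h u := lt_of_lt_of_le hpos (hlow u hu0 hu.2.le).1
      have := Real.rpow_pos_of_pos hu0 ν
      positivity
    have h2 : W t₀ ≤ -c₁ := by
      rw [hWdef, hc₁def]
      simp only []
      have h3 : φ t₀ - ν * h t₀ ≤ -(ν * h t₀) := by linarith
      have h4 := mul_le_mul_of_nonneg_left h3 (Real.rpow_nonneg ht₀.le ν)
      nlinarith [h4]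
    linarith
  set ρ : ℝ → ℝ := fun t => t^(-ν) * h t - (c₁/(2*ν)) * t^(-(2*ν)) with hρdef
  have hρd : ∀ t ∈ Set.Ioi (0:ℝ), HasDerivAt ρ (t ^ (-(2*ν)-1) * (W t + c₁)) t := by
    intro t ht
    have ht0 : (0:ℝ) < t := ht
    have hA : (0:ℝ) < t^ν := Real.rpow_pos_of_pos ht0 ν
    have base := ((Real.hasDerivAt_rpow_const (x := t) (p := -ν) (Or.inl ht0.ne')).mul
      (hh' t ht)).sub
      ((Real.hasDerivAt_rpow_const (x := t) (p := -(2*ν)) (Or.inl ht0.ne')).const_mul (c₁/(2*ν)))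
    refine base.congr_deriv ?_
    rw [hWdef]
    simp only []
    have rν : t^(-ν) = (t^ν)⁻¹ := Real.rpow_neg ht0.le ν
    have rν1 : t^(-ν-1) = (t^ν)⁻¹ / t := by
      rw [show -ν-1 = -ν + (-1) by ring, Real.rpow_add ht0, Real.rpow_neg_one, rν]
      ring
    have r2ν : t^(-(2*ν)) = ((t^ν)^2)⁻¹ := by
      rw [show -(2*ν) = -ν + -ν by ring, Real.rpow_add ht0, rν, sq]
      ring
    have r2ν1 : t^(-(2*ν)-1) = ((t^ν)^2)⁻¹ / t := by
      rw [show -(2*ν)-1 = (-(2*ν)) + (-1) by ring, Real.rpow_add ht0, Real.rpow_neg_one, r2ν]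
      ring
    rw [rν1, r2ν1, rν]
    field_simp [hν.ne']
    ring
  have hρmono : ∀ t, 0 < t → t ≤ t₀ → ρ t₀ ≤ ρ t := by
    intro t ht0 htt₀
    have h1 : (fun s => -ρ s) t ≤ (fun s => -ρ s) t₀ := by
      refine mono_aux (F := fun s => -ρ s) (F' := fun s => -(s ^ (-(2*ν)-1) * (W s + c₁)))
        ht0 htt₀ (fun s hs => (hρd s hs).neg) ?_
      intro u hu
      have hu0 : (0:ℝ) < u := lt_trans ht0 hu.1
      have h2 : W u + c₁ ≤ 0 := by linarith [hW u hu0 hu.2.le]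
      have h3 : (0:ℝ) ≤ u ^ (-(2*ν)-1) := Real.rpow_nonneg hu0.le _
      show 0 ≤ -(u ^ (-(2*ν)-1) * (W u + c₁))
      nlinarith
    simp only [] at h1
    linarith
  set R := max (-ρ t₀) 0 with hRdef
  have hR0 : 0 ≤ R := le_max_right _ _
  have hρR : ∀ t, 0 < t → t ≤ t₀ → -R ≤ ρ t := by
    intro t ht0 htt₀
    have := hρmono t ht0 htt₀
    have : -ρ t₀ ≤ R := le_max_left _ _
    linarith [hρmono t ht0 htt₀]
  set B := c₁/(4*ν*(R+1)) with hBdef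
  have hB : 0 < B := by positivity
  set t₁ := min t₀ (B ^ ((2*ν)⁻¹)) with ht₁def
  have ht₁0 : 0 < t₁ := lt_min ht₀ (Real.rpow_pos_of_pos hB _)
  refine ⟨c₁/(4*ν), by positivity, t₁, ht₁0, ?_⟩
  intro t ht0 htt₁
  have htt₀ : t ≤ t₀ := le_trans htt₁ (min_le_left _ _)
  -- h t = t^ν * ρ t + (c₁/(2ν)) * t^(-ν)
  have hA : (0:ℝ) < t^ν := Real.rpow_pos_of_pos ht0 ν
  have rν : t^(-ν) = (t^ν)⁻¹ := Real.rpow_neg ht0.le ν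
  have r2ν : t^(-(2*ν)) = ((t^ν)^2)⁻¹ := by
    rw [show -(2*ν) = -ν + -ν by ring, Real.rpow_add ht0, rν, sq]
    ring
  have e : h t = t^ν * ρ t + (c₁/(2*ν)) * t^(-ν) := by
    rw [hρdef]
    simp only []
    rw [rν, r2ν]
    field_simp
    ring
  -- bound R * t^ν ≤ (c₁/(4ν)) * t^(-ν)
  have h2ν : (0:ℝ) < 2*ν := by linarith
  have ht2ν : t^(2*ν) ≤ B := by
    have h1 : t^(2*ν) ≤ t₁^(2*ν) := Real.rpow_le_rpow ht0.le htt₁ h2ν.le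
    have h2 : t₁^(2*ν) ≤ (B ^ ((2*ν)⁻¹))^(2*ν) :=
      Real.rpow_le_rpow ht₁0.le (min_le_right _ _) h2ν.le
    have h3 : (B ^ ((2*ν)⁻¹))^(2*ν) = B := by
      rw [← Real.rpow_mul hB.le, inv_mul_cancel₀ h2ν.ne', Real.rpow_one]
    linarith
  have hRB : R * B ≤ c₁/(4*ν) := by
    have h1 : R * B ≤ (R+1) * B := by nlinarith
    have h2 : (R+1) * B = c₁/(4*ν) := by
      rw [hBdef]
      field_simp
    linarith
  have htν : t^ν = t^(2*ν) * t^(-ν) := by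
    rw [← Real.rpow_add ht0]
    ring_nf
  have hRt : R * t^ν ≤ (c₁/(4*ν)) * t^(-ν) := by
    have h1 : R * t^(2*ν) ≤ c₁/(4*ν) := by nlinarith [Real.rpow_nonneg ht0.le (2*ν)]
    have h2 : R * t^ν = (R * t^(2*ν)) * t^(-ν) := by rw [htν]; ring
    rw [h2]
    exact mul_le_mul_of_nonneg_right h1 (Real.rpow_nonneg ht0.le _)
  -- conclude
  clear_value W c₁ ρ R B t₁
  have hρt := hρR t ht0 htt₀
  have h3 : t^ν * ρ t ≥ t^ν * (-R) := mul_le_mul_of_nonneg_left hρt hA.le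
  have h4 : c₁/(2*ν) * t^(-ν) - c₁/(4*ν) * t^(-ν) = c₁/(4*ν) * t^(-ν) := by
    field_simp
    ring
  have h5 : t ^ ν * -R = -(R * t ^ ν) := by ring
  linarith [h3, hRt, e, h4, h5]
private lemma bwd_contra {a ν : ℝ} (hν : 0 < ν) (haν : 2 * a + 2 * ν ≥ 1) {h : ℝ → ℝ}
    (hL2 : MeasureTheory.IntegrableOn (fun t => h t ^ 2 * t ^ (-(2*a))) (Set.Ioi 0)
      MeasureTheory.volume)
    {c t₁ : ℝ} (hc : 0 < c) (ht₁0 : 0 < t₁)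
    (hb : ∀ t, 0 < t → t ≤ t₁ → c * t ^ (-ν) ≤ h t) : False := by
  have hint : IntegrableOn (fun t => t ^ (-(2*ν) - 2*a)) (Set.Ioo 0 t₁) volume := by
    have hg : Integrable (fun t => c⁻¹^2 * (h t ^ 2 * t ^ (-(2*a))))
        (volume.restrict (Set.Ioo 0 t₁)) :=
      (hL2.mono_set Set.Ioo_subset_Ioi_self).const_mul _
    refine hg.mono' ?_ ?_
    · refine ContinuousOn.aestronglyMeasurable ?_ measurableSet_Ioo
      intro x hx
      exact (Real.continuousAt_rpow_const x _ (Or.inl (ne_of_gt hx.1))).continuousWithinAt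
    · filter_upwards [ae_restrict_mem measurableSet_Ioo] with t htmem
      have ht0 : 0 < t := htmem.1
      have hb' := hb t ht0 htmem.2.le
      rw [Real.norm_eq_abs, abs_of_nonneg (Real.rpow_nonneg ht0.le _)]
      have e1 : t ^ (-(2*ν) - 2*a) = t^(-(2*ν)) * t^(-(2*a)) := by
        rw [← Real.rpow_add ht0]; ring_nf
      have e2 : ((t^(-ν))^2 : ℝ) = t ^ (-(2*ν)) := by
        rw [sq, ← Real.rpow_add ht0]; ring_nf
      have h5 : (c*t^(-ν))^2 * t^(-(2*a)) ≤ h t^2 * t^(-(2*a)) :=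
        mul_le_mul_of_nonneg_right
          (pow_le_pow_left₀ (by positivity) hb' 2) (Real.rpow_nonneg ht0.le _)
      have e3 : t ^ (-(2*ν)) * t^(-(2*a)) = c⁻¹^2 * ((c*t^(-ν))^2 * t^(-(2*a))) := by
        rw [← e2, mul_pow]
        field_simp
      calc t ^ (-(2*ν) - 2*a) = c⁻¹^2 * ((c*t^(-ν))^2 * t^(-(2*a))) := by rw [e1, e3]
        _ ≤ c⁻¹^2 * (h t ^2 * t^(-(2*a))) := mul_le_mul_of_nonneg_left h5 (by positivity)
  rw [intervalIntegral.integrableOn_Ioo_rpow_iff ht₁0] at hint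
  linarith

private lemma bessel_key {a ν : ℝ} (ha : 0 < a) (hν : 0 < ν) (haν : 2 * a + 2 * ν ≥ 1)
    {h : ℝ → ℝ} (hreg : ContDiffOn ℝ 2 h (Set.Ioi 0))
    (hode : ∀ t ∈ Set.Ioi (0 : ℝ),
      t * deriv (fun s : ℝ => s * deriv h s) t = (t ^ 2 + ν ^ 2) * h t)
    (hL2 : MeasureTheory.IntegrableOn (fun t => h t ^ 2 * t ^ (-(2*a))) (Set.Ioi 0)
      MeasureTheory.volume)
    {t₀ : ℝ} (ht₀ : t₀ ∈ Set.Ioi (0:ℝ)) (hpos : 0 < h t₀) : False := by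
  have ht₀' : 0 < t₀ := ht₀
  set φ : ℝ → ℝ := fun s => s * deriv h s with hφdef
  have hdh : ContDiffOn ℝ 1 (deriv h) (Set.Ioi 0) :=
    hreg.deriv_of_isOpen isOpen_Ioi (m := 1) (by norm_num)
  have hh' : ∀ t ∈ Set.Ioi (0:ℝ), HasDerivAt h (φ t / t) t := by
    intro t ht
    have hd : DifferentiableAt ℝ h t :=
      (hreg.differentiableOn (by norm_num)).differentiableAt (isOpen_Ioi.mem_nhds ht)
    have : φ t / t = deriv h t := mul_div_cancel_left₀ _ (ne_of_gt ht)
    rw [this]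
    exact hd.hasDerivAt
  have hφ : ∀ t ∈ Set.Ioi (0:ℝ), HasDerivAt φ ((t + ν^2/t) * h t) t := by
    intro t ht
    have ht0 : (t:ℝ) ≠ 0 := ne_of_gt ht
    have h1 : DifferentiableAt ℝ (deriv h) t :=
      (hdh.differentiableOn one_ne_zero).differentiableAt (isOpen_Ioi.mem_nhds ht)
    have h2 : HasDerivAt φ (1 * deriv h t + t * deriv (deriv h) t) t :=
      (hasDerivAt_id t).mul h1.hasDerivAt
    have h3 := hode t ht
    rw [h2.deriv] at h3
    have h4 : (t + ν^2/t) * h t = 1 * deriv h t + t * deriv (deriv h) t := by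
      field_simp
      linear_combination -h3
    exact h4 ▸ h2
  rcases le_total 0 (φ t₀) with hcase | hcase
  · have hlow := prop_fwd hh' hφ ht₀' hpos hcase
    obtain ⟨k, hk⟩ := exists_nat_gt a
    obtain ⟨C, hC, T, hT, hb⟩ := grow_fwd hh' hφ ht₀' hpos hlow k
    exact fwd_contra ha hL2 hC (lt_of_lt_of_le ht₀' hT) hk hb
  · have hlow := prop_bwd hh' hφ ht₀' hpos hcase
    obtain ⟨c, hc, t₁, ht₁0, hb⟩ := bwd_blowup hν hh' hφ ht₀' hpos hcase hlow
    exact bwd_contra hν haν hL2 hc ht₁0 hb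

/-- Solutions `h` on `(0,∞)` of the modified Bessel-type ODE `((t∂ₜ)² - t² - ν²)h = 0`
with `ν > 0` which, after multiplication by `t^{-(f₀+2a+1)/2}`, lie in
`t^{-1/2}L²((0,∞), t^{f₀}dt)`, where `a > 0` and `2a + 2ν ≥ 1`, are identically zero. -/
theorem bessel_ode_no_weighted_L2_solution (f₀ a ν : ℝ) (hf₀ : 0 ≤ f₀) (ha : 0 < a)
    (hν : 0 < ν) (haν : 2 * a + 2 * ν ≥ 1) (h : ℝ → ℝ)
    (hreg : ContDiffOn ℝ 2 h (Set.Ioi 0))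
    (hode : ∀ t ∈ Set.Ioi (0 : ℝ),
      t * deriv (fun s : ℝ => s * deriv h s) t = (t ^ 2 + ν ^ 2) * h t)
    (hL2 : MeasureTheory.IntegrableOn
      (fun t : ℝ => (t ^ (-(f₀ + 2 * a + 1) / 2) * h t) ^ 2 * t ^ (1 + f₀))
      (Set.Ioi 0) MeasureTheory.volume) :
    ∀ t ∈ Set.Ioi (0 : ℝ), h t = 0 := by
  have hL2' : MeasureTheory.IntegrableOn (fun t : ℝ => h t ^ 2 * t ^ (-(2*a))) (Set.Ioi 0)
      MeasureTheory.volume := by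
    refine hL2.congr_fun ?_ measurableSet_Ioi
    intro u hu
    have hu0 : (0:ℝ) < u := hu
    have e1 : (u ^ (-(f₀ + 2*a + 1)/2))^2 = u ^ (-(f₀+2*a+1)) := by
      rw [sq, ← Real.rpow_add hu0]
      ring_nf
    have e2 : u ^ (-(f₀+2*a+1)) * u^(1+f₀) = u ^ (-(2*a)) := by
      rw [← Real.rpow_add hu0]
      ring_nf
    calc (u ^ (-(f₀ + 2 * a + 1) / 2) * h u) ^ 2 * u ^ (1 + f₀)
        = h u ^ 2 * ((u ^ (-(f₀ + 2*a + 1)/2))^2 * u ^ (1+f₀)) := by ring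
      _ = h u ^ 2 * (u ^ (-(f₀+2*a+1)) * u^(1+f₀)) := by rw [e1]
      _ = h u ^ 2 * u ^ (-(2*a)) := by rw [e2]
  intro t ht
  have hup : ¬ 0 < h t := fun hp => bessel_key ha hν haν hreg hode hL2' ht hp
  have hdown : ¬ 0 < -h t := by
    intro hp
    refine bessel_key (h := fun s => -h s) ha hν haν hreg.neg ?_ ?_ ht hp
    · intro u hu
      have e : (fun s => s * deriv (fun x => -h x) s) = fun s => -(s * deriv h s) := by
        funext s
        rw [deriv.fun_neg]
        ring
      rw [e, deriv.fun_neg]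
      have := hode u hu
      linear_combination -this
    · refine hL2'.congr_fun ?_ measurableSet_Ioi
      intro u _
      simp
  push_neg at hup hdown
  linarith
end

section
/- With notation as in the indicial family of the de Rham-type operator, the formal adjoint on L²(Z) of I_q(P_a; ζ) = [[ð^Z, -ζ-(f₀-N+a+1/2)],[ζ+N+a+1/2, -ð^Z]] (with ð^Z essentially self-adjoint and N self-adjoint) equals I_q(P_a; -(ζ + f₀ + 2a + 1)); consequently ζ is an indicial root if and only if -(ζ + f₀ + 2a + 1) is. -/
open scoped InnerProductSpace ComplexConjugate


/-- The formal adjoint on `L²(Z) ⊕ L²(Z)` of the indicial family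
`I_q(P_a; ζ) = [[ð^Z, -ζ-(f₀-N+a+1/2)], [ζ+N+a+1/2, -ð^Z]]` (with `ð^Z` self-adjoint and
`N` self-adjoint) equals `I_q(P_a; -(ζ + f₀ + 2a + 1))`; consequently `ζ` is an indicial
root (i.e. the operator fails to be invertible) iff `-(ζ + f₀ + 2a + 1)` is. -/
theorem indicial_family_adjoint_symmetry {H : Type*} [NormedAddCommGroup H]
    [InnerProductSpace ℂ H] [CompleteSpace H]
    (T N : H →L[ℂ] H) (hT : IsSelfAdjoint T) (hN : IsSelfAdjoint N)
    (f₀ a : ℝ) (hf₀ : 0 ≤ f₀)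
    (A : ℝ → (WithLp 2 (H × H) →L[ℂ] WithLp 2 (H × H)))
    (hA : ∀ (ζ : ℝ) (u : WithLp 2 (H × H)),
      (A ζ u).fst = T u.fst + N u.snd - ((ζ : ℂ) + (f₀ + a + 1 / 2 : ℝ)) • u.snd ∧
      (A ζ u).snd = ((ζ : ℂ) + (a + 1 / 2 : ℝ)) • u.fst + N u.fst - T u.snd) :
    ∀ ζ : ℝ, ContinuousLinearMap.adjoint (A ζ) = A (-(ζ + f₀ + 2 * a + 1)) ∧
      (¬ IsUnit (A ζ) ↔ ¬ IsUnit (A (-(ζ + f₀ + 2 * a + 1)))) := by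
  intro ζ
  have hadj : ContinuousLinearMap.adjoint (A ζ) = A (-(ζ + f₀ + 2 * a + 1)) := by
    symm
    rw [ContinuousLinearMap.eq_adjoint_iff]
    intro x y
    rw [WithLp.prod_inner_apply, WithLp.prod_inner_apply]
    simp only [WithLp.ofLp_fst, WithLp.ofLp_snd]
    obtain ⟨h1, h2⟩ := hA (-(ζ + f₀ + 2 * a + 1)) x
    obtain ⟨h3, h4⟩ := hA ζ y
    rw [h1, h2, h3, h4]
    have hTi : ∀ u v : H, ⟪T u, v⟫_ℂ = ⟪u, T v⟫_ℂ := fun u v => by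
      conv_lhs => rw [← hT.adjoint_eq]
      rw [ContinuousLinearMap.adjoint_inner_left]
    have hNi : ∀ u v : H, ⟪N u, v⟫_ℂ = ⟪u, N v⟫_ℂ := fun u v => by
      conv_lhs => rw [← hN.adjoint_eq]
      rw [ContinuousLinearMap.adjoint_inner_left]
    have hc : ∀ (c : ℝ) (u v : H), ⟪(c : ℂ) • u, v⟫_ℂ = (c : ℂ) * ⟪u, v⟫_ℂ := fun c u v => by
      rw [inner_smul_left, Complex.conj_ofReal]
    have e1 : ((-(ζ + f₀ + 2 * a + 1) : ℝ) : ℂ) + ((f₀ + a + 1 / 2 : ℝ) : ℂ)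
        = -(((ζ + (a + 1 / 2) : ℝ) : ℂ)) := by push_cast; ring
    have e2 : ((-(ζ + f₀ + 2 * a + 1) : ℝ) : ℂ) + ((a + 1 / 2 : ℝ) : ℂ)
        = -(((ζ + (f₀ + a + 1 / 2) : ℝ) : ℂ)) := by push_cast; ring
    have e3 : ((ζ : ℝ) : ℂ) + ((f₀ + a + 1 / 2 : ℝ) : ℂ) = ((ζ + (f₀ + a + 1 / 2) : ℝ) : ℂ) := by
      push_cast; ring
    have e4 : ((ζ : ℝ) : ℂ) + ((a + 1 / 2 : ℝ) : ℂ) = ((ζ + (a + 1 / 2) : ℝ) : ℂ) := by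
      push_cast; ring
    rw [e1, e2, e3, e4]
    simp only [inner_add_left, inner_sub_left, inner_add_right, inner_sub_right,
      inner_smul_left, inner_smul_right, neg_smul, inner_neg_left, Complex.conj_ofReal,
      hTi, hNi]
    ring
  refine ⟨hadj, ?_⟩
  rw [← hadj, ← ContinuousLinearMap.star_eq_adjoint, isUnit_star]
end
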